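/- Fix positive integers ℓ and N, and let φ₁, …, φ_N be i.i.d. Fibonacci random variables. For any tuple i = (i₁, …, i_{2ℓ}) ∈ {1,…,N}^{2ℓ}, the expectation E[∏_{λ=1}^{ℓ} (φ_{i_{2λ−1}} φ_{i_{2λ}} − δ_{i_{2λ−1}, i_{2λ}})] is a nonnegative integer, and it is at least 1 whenever the set partition Π(i) of {1,…,2ℓ} generated by i has no singleton blocks and contains none of the blocks {2λ−1, 2λ} for λ = 1, …, ℓ. -/

import Mathlib

open MeasureTheory ProbabilityTheory

/-- The position `2λ−1` (0-indexed: `2l`) in `{1,…,2ℓ}`. -/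
def pos1 {ℓ : ℕ} (l : Fin ℓ) : Fin (2 * ℓ) := ⟨2 * l.1, by have := l.isLt; omega⟩

/-- The position `2λ` (0-indexed: `2l+1`) in `{1,…,2ℓ}`. -/
def pos2 {ℓ : ℕ} (l : Fin ℓ) : Fin (2 * ℓ) := ⟨2 * l.1 + 1, by have := l.isLt; omega⟩

/-- Integral of a finite product of independent real random variables. -/
lemma aux_integral_prod {Ω : Type*} [MeasureSpace Ω] [IsProbabilityMeasure (volume : Measure Ω)]
    {N : ℕ} (f : Fin N → Ω → ℝ) (hm : ∀ k, Measurable (f k))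
    (hindep : iIndepFun f volume) (s : Finset (Fin N)) :
    ∫ ω, ∏ k ∈ s, f k ω = ∏ k ∈ s, ∫ ω, f k ω := by
  induction s using Finset.cons_induction with
  | empty => simp
  | cons a s ha ih =>
    have h1 : IndepFun (fun ω => ∏ k ∈ s, f k ω) (f a) volume := by
      have := hindep.indepFun_finsetProd_of_notMem hm ha
      rwa [Finset.prod_fn] at this
    have h2 := h1.symm.integral_fun_mul_eq_mul_integral (hm a).aestronglyMeasurable
      (Finset.measurable_prod s fun k _ => hm k).aestronglyMeasurable
    simp only [Finset.prod_cons]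
    rw [h2, ih]

/-- The `m`-th moment of a Fibonacci variable, as a natural number. -/
def fibMoment (m : ℕ) : ℕ := if m = 0 then 1 else Nat.fib (m - 1)

theorem stmt_4 {Ω : Type*} [MeasureSpace Ω] [IsProbabilityMeasure (volume : Measure Ω)]
    (ℓ N : ℕ) (φ : Fin N → Ω → ℝ) (hmeas : ∀ k, Measurable (φ k))
    (hindep : iIndepFun φ volume)
    (hsq : ∀ k, ∀ᵐ ω ∂volume, φ k ω ^ 2 = φ k ω + 1)
    (hmean : ∀ k, ∫ ω, φ k ω = 0)
    (i : Fin (2 * ℓ) → Fin N) :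
    (∃ m : ℕ,
      (∫ ω, ∏ l : Fin ℓ, (φ (i (pos1 l)) ω * φ (i (pos2 l)) ω -
          if i (pos1 l) = i (pos2 l) then 1 else 0)) = m) ∧
    ((∀ p : Fin (2 * ℓ), (Finset.univ.filter fun q => i q = i p).card ≠ 1) →
     (∀ l : Fin ℓ,
        (Finset.univ.filter fun q => i q = i (pos1 l)) ≠ ({pos1 l, pos2 l} : Finset _)) →
      1 ≤ ∫ ω, ∏ l : Fin ℓ, (φ (i (pos1 l)) ω * φ (i (pos2 l)) ω -
          if i (pos1 l) = i (pos2 l) then 1 else 0)) := by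
  classical
  let A : Fin ℓ → Fin N := fun l => i (pos1 l)
  let B : Fin ℓ → Fin N := fun l => i (pos2 l)
  have hA : ∀ l, i (pos1 l) = A l := fun _ => rfl
  have hB : ∀ l, i (pos2 l) = B l := fun _ => rfl
  let e : Fin ℓ → Fin N → ℕ := fun l k =>
    if A l = B l then (if A l = k then 1 else 0)
    else ((if A l = k then 1 else 0) + (if B l = k then 1 else 0))
  have he : ∀ l k, e l k =
      if A l = B l then (if A l = k then 1 else 0)
      else ((if A l = k then 1 else 0) + (if B l = k then 1 else 0)) := fun _ _ => rfl
  let n : Fin N → ℕ := fun k => ∑ l, e l k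
  have hn : ∀ k, n k = ∑ l, e l k := fun _ => rfl
  -- boundedness
  have hbound : ∀ k, ∀ᵐ ω ∂volume, |φ k ω| ≤ 2 := by
    intro k
    filter_upwards [hsq k] with ω hω
    rw [abs_le]; constructor <;> nlinarith [sq_nonneg (φ k ω - 2), sq_nonneg (φ k ω + 2)]
  have hint_pow : ∀ k (m : ℕ), Integrable (fun ω => φ k ω ^ m) volume := by
    intro k m
    refine Integrable.mono' (integrable_const ((2:ℝ) ^ m))
      ((hmeas k).pow_const m).aestronglyMeasurable ?_
    filter_upwards [hbound k] with ω hω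
    calc ‖φ k ω ^ m‖ = |φ k ω| ^ m := by rw [Real.norm_eq_abs, abs_pow]
    _ ≤ 2 ^ m := pow_le_pow_left₀ (abs_nonneg _) hω m
  -- moments
  have hpow_ae : ∀ k (m : ℕ), ∀ᵐ ω ∂volume,
      φ k ω ^ (m + 1) = (Nat.fib (m+1) : ℝ) * φ k ω + Nat.fib m := by
    intro k m
    filter_upwards [hsq k] with ω hω
    induction m with
    | zero => simp
    | succ m ih =>
      rw [pow_succ, ih, Nat.fib_add_two]
      push_cast
      nlinarith [hω]
  have hval : ∀ k (m : ℕ), ∫ ω, φ k ω ^ m = (fibMoment m : ℝ) := by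
    intro k m
    match m with
    | 0 => simp [fibMoment]
    | m + 1 =>
      rw [integral_congr_ae (hpow_ae k m)]
      have h1 : Integrable (fun ω => (Nat.fib (m+1) : ℝ) * φ k ω) volume := by
        have : Integrable (φ k) volume := by simpa using hint_pow k 1
        exact this.const_mul _
      rw [integral_add h1 (integrable_const _), integral_const_mul, hmean k, integral_const]
      simp [fibMoment]
  -- a.e. identity with the monomial
  have hmono : ∀ a : Fin N, ∀ ω, ∏ k, φ k ω ^ (if a = k then 1 else 0) = φ a ω := by
    intro a ω
    simp [pow_ite]
  have key : (fun ω => ∏ l : Fin ℓ, (φ (A l) ω * φ (B l) ω -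
        if A l = B l then 1 else 0)) =ᵐ[volume] fun ω => ∏ k, φ k ω ^ n k := by
    have hall : ∀ᵐ ω ∂volume, ∀ k, φ k ω ^ 2 = φ k ω + 1 := ae_all_iff.2 hsq
    filter_upwards [hall] with ω hω
    have step : ∀ l : Fin ℓ, (φ (A l) ω * φ (B l) ω - if A l = B l then 1 else 0)
        = ∏ k, φ k ω ^ e l k := by
      intro l
      by_cases h : A l = B l
      · have hφ : φ (A l) ω * φ (B l) ω - (1:ℝ) = φ (A l) ω := by
          rw [← h]; linear_combination hω (A l)
        rw [if_pos h, hφ]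
        calc φ (A l) ω = ∏ k, φ k ω ^ (if A l = k then 1 else 0) := (hmono _ _).symm
        _ = ∏ k, φ k ω ^ e l k :=
          Finset.prod_congr rfl fun k _ => by rw [he l k, if_pos h]
      · rw [if_neg h, sub_zero]
        calc φ (A l) ω * φ (B l) ω
            = (∏ k, φ k ω ^ (if A l = k then 1 else 0)) *
              ∏ k, φ k ω ^ (if B l = k then 1 else 0) := by rw [hmono, hmono]
        _ = ∏ k, φ k ω ^ e l k := by
            rw [← Finset.prod_mul_distrib]
            exact Finset.prod_congr rfl fun k _ => by rw [← pow_add, he l k, if_neg h]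
    rw [Finset.prod_congr rfl (fun l _ => step l), Finset.prod_comm]
    exact Finset.prod_congr rfl fun k _ => Finset.prod_pow_eq_pow_sum _ _ _
  -- the integral equals the product of moments
  have hindep' : iIndepFun (fun k ω => φ k ω ^ n k) volume :=
    hindep.comp (fun k (x : ℝ) => x ^ n k) (fun k => measurable_id.pow_const _)
  have hmain : (∫ ω, ∏ l : Fin ℓ, (φ (A l) ω * φ (B l) ω -
      if A l = B l then 1 else 0)) = ((∏ k, fibMoment (n k) : ℕ) : ℝ) := by
    rw [integral_congr_ae key]
    rw [aux_integral_prod (fun k ω => φ k ω ^ n k)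
      (fun k => (hmeas k).pow_const _) hindep' Finset.univ]
    push_cast
    exact Finset.prod_congr rfl fun k _ => hval k (n k)
  constructor
  · exact ⟨∏ k, fibMoment (n k), hmain⟩
  · intro h1 h2
    -- combinatorics
    have hsum : ∀ g : Fin (2*ℓ) → ℕ, ∑ p, g p = ∑ l : Fin ℓ, (g (pos1 l) + g (pos2 l)) := by
      intro g
      have hbij : Function.Bijective
          (fun x : Fin ℓ × Bool => if x.2 then pos2 x.1 else pos1 x.1) := by
        rw [Fintype.bijective_iff_injective_and_card]
        constructor
        · rintro ⟨l₁, b₁⟩ ⟨l₂, b₂⟩ h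
          simp only at h
          have hv : (if b₁ then pos2 l₁ else pos1 l₁).1 = (if b₂ then pos2 l₂ else pos1 l₂).1 :=
            congrArg Fin.val h
          cases b₁ <;> cases b₂ <;>
            simp only [if_true, if_false, Bool.false_eq_true, pos1, pos2] at hv <;>
            first
              | (exfalso; omega)
              | (obtain rfl : l₁ = l₂ := Fin.ext (by omega); rfl)
        · simp only [Fintype.card_prod, Fintype.card_bool, Fintype.card_fin]; omega
      rw [← Fintype.sum_bijective _ hbij _ g (fun x => rfl), Fintype.sum_prod_type]
      refine Finset.sum_congr rfl fun l _ => ?_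
      rw [Fintype.sum_bool]
      simp [add_comm]
    have hcd : ∀ k, (Finset.univ.filter fun p => i p = k).card
        = n k + (Finset.univ.filter fun l : Fin ℓ => A l = B l ∧ A l = k).card := by
      intro k
      rw [Finset.card_filter, Finset.card_filter,
        hsum (fun p => if i p = k then 1 else 0)]
      rw [hn k, ← Finset.sum_add_distrib]
      refine Finset.sum_congr rfl fun l _ => ?_
      simp only [hA, hB, he]
      by_cases h : A l = B l <;> by_cases ha : A l = k <;> by_cases hb : B l = k <;>
        simp_all
    have hdn : ∀ k, (Finset.univ.filter fun l : Fin ℓ => A l = B l ∧ A l = k).card ≤ n k := by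
      intro k
      rw [Finset.card_filter, hn k]
      refine Finset.sum_le_sum fun l _ => ?_
      rw [he l k]
      by_cases h : A l = B l
      · by_cases ha : A l = k
        · rw [if_pos h, if_pos ha, if_pos ⟨h, ha⟩]
        · rw [if_pos h, if_neg ha, if_neg (fun hc => ha hc.2)]
      · rw [if_neg h, if_neg (fun hc => h hc.1)]
        exact Nat.zero_le _
    have hne1 : ∀ k, n k ≠ 1 := by
      intro k hk1
      have hd1 : (Finset.univ.filter fun l : Fin ℓ => A l = B l ∧ A l = k).card ≤ 1 :=
        hk1 ▸ hdn k
      rcases Nat.le_one_iff_eq_zero_or_eq_one.mp hd1 with h0 | hone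
      · -- singleton block
        have hck : (Finset.univ.filter fun p => i p = k).card = 1 := by
          rw [hcd k, hk1, h0]
        obtain ⟨p, hp⟩ := Finset.card_pos.mp (by omega : 0 <
          (Finset.univ.filter fun p => i p = k).card)
        simp only [Finset.mem_filter, Finset.mem_univ, true_and] at hp
        refine h1 p ?_
        simp only [hp]
        exact hck
      · -- forbidden doubleton
        have hck : (Finset.univ.filter fun p => i p = k).card = 2 := by
          rw [hcd k, hk1, hone]
        obtain ⟨l, hl⟩ := Finset.card_pos.mp (by omega : 0 <
          (Finset.univ.filter fun l : Fin ℓ => A l = B l ∧ A l = k).card)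
        simp only [Finset.mem_filter, Finset.mem_univ, true_and] at hl
        obtain ⟨hdiag, hak⟩ := hl
        have hne : pos1 l ≠ pos2 l := by
          intro hcon
          have : (pos1 l).1 = (pos2 l).1 := by rw [hcon]
          simp only [pos1, pos2] at this
          omega
        have hsub : ({pos1 l, pos2 l} : Finset (Fin (2*ℓ))) ⊆
            Finset.univ.filter fun q => i q = k := by
          intro q hq
          simp only [Finset.mem_insert, Finset.mem_singleton] at hq
          rcases hq with rfl | rfl <;> simp only [Finset.mem_filter, Finset.mem_univ, true_and]
          · exact hak
          · rw [hB l, ← hdiag]; exact hak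
        have heq : (Finset.univ.filter fun q => i q = k) = {pos1 l, pos2 l} :=
          (Finset.eq_of_subset_of_card_le hsub (by rw [Finset.card_pair hne, hck])).symm
        refine h2 l ?_
        simp only [show i (pos1 l) = k from hak]
        exact heq
    have hfac : ∀ k, 1 ≤ fibMoment (n k) := by
      intro k
      rcases Nat.eq_zero_or_pos (n k) with h0 | hpos
      · simp [fibMoment, h0]
      · have hge : 2 ≤ n k := by have := hne1 k; omega
        have : 0 < Nat.fib (n k - 1) := Nat.fib_pos.mpr (by omega)
        simp only [fibMoment, if_neg (by omega : n k ≠ 0)]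
        omega
    calc (1:ℝ) ≤ ((∏ k, fibMoment (n k) : ℕ) : ℝ) := by
          exact_mod_cast Finset.one_le_prod' fun k _ => hfac k
    _ = _ := hmain.symm
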